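/- If A and B are bounded operators with AB = λBA, AB ≠ 0, A has a bounded inverse, and σ(B) ≠ {0}, then |λ| = 1. -/

import Mathlib

open Pointwise


variable {H : Type*} [NormedAddCommGroup H] [InnerProductSpace ℂ H] [CompleteSpace H]

theorem stmt11 (A B : H →L[ℂ] H) (lam : ℂ)
    (h : A * B = lam • (B * A)) (hne : A * B ≠ 0) (hAinv : IsUnit A)
    (hspec : spectrum ℂ B ≠ {0}) : ‖lam‖ = 1 := by
  have hlam : lam ≠ 0 := by
    rintro rfl
    simp at h
    exact hne h
  have hH : Nontrivial H := by
    by_contra hn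
    rw [not_nontrivial_iff_subsingleton] at hn
    exact hne (Subsingleton.elim _ _)
  -- conjugation: A * B * A⁻¹ = lam • B
  set u := hAinv.unit with hu
  have huA : (u : H →L[ℂ] H) = A := hAinv.unit_spec
  have hconj : (u : H →L[ℂ] H) * B * ↑u⁻¹ = lam • B := by
    rw [huA, h]
    rw [smul_mul_assoc, mul_assoc]
    have : A * ↑u⁻¹ = 1 := by rw [← huA]; exact u.mul_inv
    rw [this, mul_one]
  have hsm : spectrum ℂ (lam • B) = (lam • spectrum ℂ B : Set ℂ) := by
    have := spectrum.unit_smul_eq_smul (R := ℂ) B (Units.mk0 lam hlam)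
    simpa [Units.smul_def] using this
  have E : spectrum ℂ B = (lam • spectrum ℂ B : Set ℂ) := by
    rw [← hsm, ← hconj, spectrum.units_conjugate]
  have claim1 : ∀ n : ℕ, ∀ μ ∈ spectrum ℂ B, lam ^ n * μ ∈ spectrum ℂ B := by
    intro n
    induction n with
    | zero => intro μ hμ; simpa using hμ
    | succ n ih =>
      intro μ hμ
      have h1 := ih μ hμ
      have : lam • (lam ^ n * μ) ∈ (lam • spectrum ℂ B : Set ℂ) := Set.smul_mem_smul_set h1
      rw [← E] at this
      simpa [pow_succ, mul_comm, mul_assoc, mul_left_comm, smul_eq_mul] using this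
  have claim2 : ∀ n : ℕ, ∀ μ ∈ spectrum ℂ B, ∃ ν ∈ spectrum ℂ B, μ = lam ^ n * ν := by
    intro n
    induction n with
    | zero => intro μ hμ; exact ⟨μ, hμ, by simp⟩
    | succ n ih =>
      intro μ hμ
      obtain ⟨ν, hν, rfl⟩ := ih μ hμ
      rw [E] at hν
      obtain ⟨ρ, hρ, rfl⟩ := hν
      exact ⟨ρ, hρ, by simp [smul_eq_mul]; ring⟩
  -- a nonzero element of the spectrum
  obtain ⟨μ, hμ, hμ0⟩ : ∃ μ ∈ spectrum ℂ B, μ ≠ 0 := by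
    by_contra hc
    push_neg at hc
    apply hspec
    apply Set.eq_of_subset_of_subset
    · intro x hx; exact hc x hx
    · intro x hx
      obtain ⟨ν, hν⟩ := spectrum.nonempty B
      have := hc ν hν
      rw [Set.mem_singleton_iff] at hx
      rw [hx, ← this]; exact hν
  by_contra habs
  rcases lt_or_gt_of_ne habs with hlt | hgt
  · -- |lam| < 1 : use claim2
    have hB0 : (0:ℝ) < ‖μ‖ := by
      simpa [norm_pos_iff] using hμ0
    obtain ⟨n, hn⟩ := exists_pow_lt_of_lt_one
      (x := ‖μ‖ / (‖B‖ + 1)) (y := ‖lam‖)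
      (by positivity) hlt
    obtain ⟨ν, hν, hμν⟩ := claim2 n μ hμ
    have hbound : ‖ν‖ ≤ ‖B‖ := spectrum.norm_le_norm_of_mem hν
    have : ‖μ‖ ≤ ‖lam‖ ^ n * ‖B‖ := by
      rw [hμν, norm_mul, norm_pow]
      exact mul_le_mul_of_nonneg_left hbound (by positivity)
    have h2 : ‖lam‖ ^ n * ‖B‖ < ‖μ‖ := by
      calc ‖lam‖ ^ n * ‖B‖
          < ‖μ‖ / (‖B‖ + 1) * (‖B‖ + 1) := by
            apply mul_lt_mul' hn.le (by linarith) (norm_nonneg B)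
            · positivity
          _ = ‖μ‖ := by field_simp
    linarith
  · -- |lam| > 1 : use claim1
    obtain ⟨n, hn⟩ := pow_unbounded_of_one_lt (y := ‖lam‖)
      (‖B‖ / ‖μ‖) hgt
    have hmem := claim1 n μ hμ
    have hbound : ‖lam ^ n * μ‖ ≤ ‖B‖ := spectrum.norm_le_norm_of_mem hmem
    rw [norm_mul, norm_pow] at hbound
    have hB0 : (0:ℝ) < ‖μ‖ := by
      simpa [norm_pos_iff] using hμ0
    have : ‖B‖ < ‖lam‖ ^ n * ‖μ‖ := by
      have := (div_lt_iff₀ hB0).mp hn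
      linarith
    linarith
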